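/- (Splittability of II* into I₅ + I₁ + I₁ + I₁ + I₁ + I₁) There exist matrices C, B₁, B₂, B₃, B₄, B₅ ∈ SL(2,ℤ) with C conjugate in SL(2,ℤ) to A_{I₅} = [[1,5],[0,1]] and B₁, …, B₅ each conjugate to A_{I₁} = [[1,1],[0,1]], such that the product C·B₁·B₂·B₃·B₄·B₅ is conjugate in SL(2,ℤ) to A_{II*} = [[0,-1],[1,1]]. In other words, the fiber type II* admits a monodromy decomposition into I₅ plus five copies of I₁. -/

import Mathlib

/-- The special linear group `SL(2, ℤ)`. -/
abbrev SL2Z := Matrix.SpecialLinearGroup (Fin 2) ℤ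

/-- `A` is conjugate to `B` in `SL(2, ℤ)`: there is `P ∈ SL(2,ℤ)` with `P * A * P⁻¹ = B`. -/
def ConjTo (A B : SL2Z) : Prop := ∃ P : SL2Z, P * A * P⁻¹ = B

/-- The standard monodromy matrix `A_{I_n} = [[1,n],[0,1]]`. -/
def AI (n : ℤ) : SL2Z := ⟨!![1, n; 0, 1], by simp [Matrix.det_fin_two_of]⟩

/-- The standard monodromy matrix `A_{II} = [[1,1],[-1,0]]`. -/
def AII : SL2Z := ⟨!![1, 1; -1, 0], by norm_num [Matrix.det_fin_two_of]⟩

/-- The standard monodromy matrix `A_{III} = [[0,1],[-1,0]]`. -/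
def AIII : SL2Z := ⟨!![0, 1; -1, 0], by norm_num [Matrix.det_fin_two_of]⟩

/-- The standard monodromy matrix `A_{IV} = [[0,1],[-1,-1]]`. -/
def AIV : SL2Z := ⟨!![0, 1; -1, -1], by norm_num [Matrix.det_fin_two_of]⟩

/-- The standard monodromy matrix `A_{I₀*} = -I`. -/
def negI : SL2Z := ⟨!![-1, 0; 0, -1], by norm_num [Matrix.det_fin_two_of]⟩

/-- The standard monodromy matrix `A_{I_n*} = -[[1,n],[0,1]]`. -/
def AIstar (n : ℤ) : SL2Z := ⟨!![-1, -n; 0, -1], by simp [Matrix.det_fin_two_of]⟩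

/-- The standard monodromy matrix `A_{IV*} = [[-1,-1],[1,0]]`. -/
def AIVstar : SL2Z := ⟨!![-1, -1; 1, 0], by norm_num [Matrix.det_fin_two_of]⟩

/-- The standard monodromy matrix `A_{III*} = [[0,-1],[1,0]]`. -/
def AIIIstar : SL2Z := ⟨!![0, -1; 1, 0], by norm_num [Matrix.det_fin_two_of]⟩

/-- The standard monodromy matrix `A_{II*} = [[0,-1],[1,1]]`. -/
def AIIstar : SL2Z := ⟨!![0, -1; 1, 1], by norm_num [Matrix.det_fin_two_of]⟩

def Mk (a b c d : ℤ) (h : a * d - b * c = 1 := by norm_num) : SL2Z :=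
  ⟨!![a, b; c, d], by simpa [Matrix.det_fin_two_of] using h⟩

lemma conj_of (P : SL2Z) {A B : SL2Z} (h : P * A = B * P) : ConjTo A B :=
  ⟨P, by rw [mul_inv_eq_iff_eq_mul, h]⟩

/-- The fiber type `II*` admits a monodromy decomposition into `I₅` plus five
copies of `I₁`. -/
theorem IIstar_decomposition_I5_five_I1 :
    ∃ C B₁ B₂ B₃ B₄ B₅ : SL2Z, ConjTo C (AI 5) ∧ ConjTo B₁ (AI 1) ∧ ConjTo B₂ (AI 1) ∧
      ConjTo B₃ (AI 1) ∧ ConjTo B₄ (AI 1) ∧ ConjTo B₅ (AI 1) ∧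
      ConjTo (C * B₁ * B₂ * B₃ * B₄ * B₅) AIIstar := by
  refine ⟨Mk 1 0 (-5) 1, Mk 1 0 (-1) 1, Mk 1 0 (-1) 1, Mk 0 1 (-1) 2, Mk 1 0 (-1) 1,
    Mk 2 1 (-1) 0, ?_, ?_, ?_, ?_, ?_, ?_, ?_⟩
  · refine conj_of (Mk (-4) (-1) 1 0) ?_
    ext i j
    fin_cases i <;> fin_cases j <;>
      rfl
  · refine conj_of (Mk (-4) (-1) 1 0) ?_
    ext i j
    fin_cases i <;> fin_cases j <;>
      rfl
  · refine conj_of (Mk (-4) (-1) 1 0) ?_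
    ext i j
    fin_cases i <;> fin_cases j <;>
      rfl
  · refine conj_of (Mk (-4) 3 1 (-1)) ?_
    ext i j
    fin_cases i <;> fin_cases j <;>
      rfl
  · refine conj_of (Mk (-4) (-1) 1 0) ?_
    ext i j
    fin_cases i <;> fin_cases j <;>
      rfl
  · refine conj_of (Mk (-4) (-3) (-1) (-1)) ?_
    ext i j
    fin_cases i <;> fin_cases j <;>
      rfl
  · refine conj_of (Mk (-4) (-1) 1 0) ?_
    ext i j
    fin_cases i <;> fin_cases j <;>
      rfl
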